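/- Let $n$ be a positive integer and let $t$ be a real number with $-1 \le t < 1$ and $t \ne 0$. Then $\sum_{k=1}^{\infty} \frac{t^k}{k \binom{n+k}{k}} = \frac{1}{1-t} \sum_{k=1}^{n} \big(H_k + H_{n-k} - H_n\big)\Big(\frac{t-1}{t}\Big)^k + \sum_{k=1}^{n} \frac{1}{k}\Big(\frac{t-1}{t}\Big)^{k-1} - \Big(\frac{t-1}{t}\Big)^n \log(1-t)$. -/

import Mathlib

open MeasureTheory intervalIntegral

/-- The `n`-th harmonic number `H_n = ∑_{k=1}^n 1/k`, with `H_0 = 0`. -/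
noncomputable def H (n : ℕ) : ℝ := ∑ i ∈ Finset.range n, (1 : ℝ) / (i + 1)

lemma H_succ (m : ℕ) : H (m+1) = H m + 1/(m+1) := by
  simp [H, Finset.sum_range_succ]

noncomputable def RR (n : ℕ) (t : ℝ) : ℝ :=
  ∑ j ∈ Finset.range n, (n.choose (j+1) : ℝ) * (t-1)^(n-(j+1)) * (1-(1-t)^(j+1)) / (j+1)

noncomputable def RS (n : ℕ) (t : ℝ) : ℝ :=
  -∑ k ∈ Finset.range n, (H (k+1) + H (n-(k+1)) - H n) * (t-1)^k * t^(n-(k+1))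
  + ∑ k ∈ Finset.range n, (t-1)^k * t^(n-k) / (k+1)

lemma telescope (n : ℕ) (t : ℝ) :
    ∑ k ∈ Finset.range (n+1), (t-1)^k * t^(n-k) = t^(n+1) - (t-1)^(n+1) := by
  have h : ∀ k ∈ Finset.range (n+1), (t-1)^k * t^(n-k)
      = (fun k => t^(n+1-k) * (t-1)^k) k - (fun k => t^(n+1-k) * (t-1)^k) (k+1) := by
    intro k hk
    simp only [Finset.mem_range] at hk
    have h1 : n + 1 - k = (n - k) + 1 := by omega
    have h2 : n + 1 - (k+1) = n - k := by omega
    simp only [h1, h2]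
    ring
  rw [Finset.sum_congr rfl h, Finset.sum_range_sub' (fun k => t^(n+1-k) * (t-1)^k) (n+1)]
  simp

lemma RR_rec (n : ℕ) (t : ℝ) : RR (n+1) t = (t-1) * RR n t + t^(n+1)/(n+1) := by
  have pascal : ∀ j : ℕ, ((n+1).choose (j+1) : ℝ) = (n.choose j : ℝ) + (n.choose (j+1) : ℝ) := by
    intro j; rw [Nat.choose_succ_succ]; push_cast; ring
  have expand : RR (n+1) t
      = ∑ j ∈ Finset.range (n+1), ((n.choose j : ℝ)) * (t-1)^(n-j) * (1-(1-t)^(j+1)) / (j+1)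
      + ∑ j ∈ Finset.range (n+1), ((n.choose (j+1) : ℝ)) * (t-1)^(n-j) * (1-(1-t)^(j+1)) / (j+1) := by
    rw [RR, ← Finset.sum_add_distrib]
    refine Finset.sum_congr rfl fun j hj => ?_
    have : n + 1 - (j+1) = n - j := by omega
    rw [this, pascal j]; ring
  have hSb : ∑ j ∈ Finset.range (n+1), ((n.choose (j+1) : ℝ)) * (t-1)^(n-j) * (1-(1-t)^(j+1)) / (j+1)
      = (t-1) * RR n t := by
    rw [Finset.sum_range_succ, Nat.choose_succ_self]
    rw [RR, Finset.mul_sum]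
    simp only [Nat.cast_zero, zero_mul, zero_div, add_zero]
    refine Finset.sum_congr rfl fun j hj => ?_
    simp only [Finset.mem_range] at hj
    have : n - j = (n - (j+1)) + 1 := by omega
    rw [this, pow_succ]; ring
  have hSa : ∑ j ∈ Finset.range (n+1), ((n.choose j : ℝ)) * (t-1)^(n-j) * (1-(1-t)^(j+1)) / (j+1)
      = t^(n+1)/(n+1) := by
    have step : ∀ j : ℕ, (n.choose j : ℝ) / (j+1) = ((n+1).choose (j+1) : ℝ) / (n+1) := by
      intro j
      have h' : ((n:ℝ)+1) * (n.choose j : ℝ) = ((n+1).choose (j+1) : ℝ) * ((j:ℝ)+1) := by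
        exact_mod_cast congrArg (Nat.cast (R := ℝ)) (Nat.add_one_mul_choose_eq n j)
      have hj : ((j:ℝ)+1) ≠ 0 := by positivity
      have hn : ((n:ℝ)+1) ≠ 0 := by positivity
      rw [div_eq_div_iff hj hn]
      linarith [h']
    have e1 : ∑ j ∈ Finset.range (n+1), ((n.choose j : ℝ)) * (t-1)^(n-j) * (1-(1-t)^(j+1)) / (j+1)
        = (∑ j ∈ Finset.range (n+1), ((n+1).choose (j+1) : ℝ) * ((t-1)^(n-j) * (1-(1-t)^(j+1)))) / (n+1) := by
      rw [Finset.sum_div]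
      refine Finset.sum_congr rfl fun j hj => ?_
      calc (n.choose j : ℝ) * (t-1)^(n-j) * (1-(1-t)^(j+1)) / (j+1)
          = ((n.choose j : ℝ) / (j+1)) * ((t-1)^(n-j) * (1-(1-t)^(j+1))) := by ring
        _ = (((n+1).choose (j+1) : ℝ) / (n+1)) * ((t-1)^(n-j) * (1-(1-t)^(j+1))) := by rw [step j]
        _ = ((n+1).choose (j+1) : ℝ) * ((t-1)^(n-j) * (1-(1-t)^(j+1))) / (n+1) := by ring
    rw [e1]
    congr 1
    have split : ∑ j ∈ Finset.range (n+1), ((n+1).choose (j+1) : ℝ) * ((t-1)^(n-j) * (1-(1-t)^(j+1)))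
        = ∑ j ∈ Finset.range (n+1), ((n+1).choose (j+1) : ℝ) * (t-1)^(n-j)
        - ∑ j ∈ Finset.range (n+1), ((n+1).choose (j+1) : ℝ) * (t-1)^(n-j) * (1-t)^(j+1) := by
      rw [← Finset.sum_sub_distrib]
      refine Finset.sum_congr rfl fun j hj => ?_; ring
    have bin1 : ∑ j ∈ Finset.range (n+1), ((n+1).choose (j+1) : ℝ) * (t-1)^(n-j)
        = t^(n+1) - (t-1)^(n+1) := by
      have h := add_pow (1:ℝ) (t-1) (n+1)
      simp only [one_pow, one_mul] at h
      have h2 : (1 + (t-1))^(n+1) = t^(n+1) := by ring_nf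
      rw [h2] at h
      rw [Finset.sum_range_succ' (fun k => (t-1)^(n+1-k) * ((n+1).choose k : ℝ)) (n+1)] at h
      simp only [Nat.choose_zero_right, Nat.cast_one, mul_one, Nat.sub_zero] at h
      have e : ∑ j ∈ Finset.range (n+1), ((n+1).choose (j+1) : ℝ) * (t-1)^(n-j)
          = ∑ k ∈ Finset.range (n+1), (t-1)^(n+1-(k+1)) * ((n+1).choose (k+1) : ℝ) := by
        refine Finset.sum_congr rfl fun j hj => ?_
        have : n + 1 - (j+1) = n - j := by omega
        rw [this]; ring
      rw [e]; linarith
    have bin2 : ∑ j ∈ Finset.range (n+1), ((n+1).choose (j+1) : ℝ) * (t-1)^(n-j) * (1-t)^(j+1)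
        = -(t-1)^(n+1) := by
      have h := add_pow (1-t) (t-1) (n+1)
      have h2 : ((1-t) + (t-1))^(n+1) = 0 := by
        have e0 : (1-t) + (t-1) = 0 := by ring
        rw [e0]; exact zero_pow (Nat.succ_ne_zero n)
      rw [h2] at h
      rw [Finset.sum_range_succ' (fun k => (1-t)^k * (t-1)^(n+1-k) * ((n+1).choose k : ℝ)) (n+1)] at h
      simp only [Nat.choose_zero_right, Nat.cast_one, mul_one, Nat.sub_zero, pow_zero, one_mul] at h
      have e : ∑ j ∈ Finset.range (n+1), ((n+1).choose (j+1) : ℝ) * (t-1)^(n-j) * (1-t)^(j+1)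
          = ∑ k ∈ Finset.range (n+1), (1-t)^(k+1) * (t-1)^(n+1-(k+1)) * ((n+1).choose (k+1) : ℝ) := by
        refine Finset.sum_congr rfl fun j hj => ?_
        have : n + 1 - (j+1) = n - j := by omega
        rw [this]; ring
      rw [e]; linarith
    rw [split, bin1, bin2]; ring
  rw [expand, hSa, hSb]; ring

lemma RS_rec (n : ℕ) (t : ℝ) : RS (n+1) t = (t-1) * RS n t + t^(n+1)/(n+1) := by
  rw [RS, RS]
  simp only [Nat.add_sub_add_right]
  have expand1 : ∑ k ∈ Finset.range (n+1), (H (k+1) + H (n-k) - H (n+1)) * (t-1)^k * t^(n-k)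
      = ∑ k ∈ Finset.range (n+1), (H k + H (n-k) - H n) * (t-1)^k * t^(n-k)
      + ∑ k ∈ Finset.range (n+1), (1/((k:ℝ)+1) - 1/((n:ℝ)+1)) * (t-1)^k * t^(n-k) := by
    rw [← Finset.sum_add_distrib]
    refine Finset.sum_congr rfl fun k hk => ?_
    rw [H_succ k, H_succ n]
    push_cast; ring
  have hSA : ∑ k ∈ Finset.range (n+1), (H k + H (n-k) - H n) * (t-1)^k * t^(n-k)
      = (t-1) * ∑ k ∈ Finset.range n, (H (k+1) + H (n-(k+1)) - H n) * (t-1)^k * t^(n-(k+1)) := by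
    rw [Finset.sum_range_succ' (fun k => (H k + H (n-k) - H n) * (t-1)^k * t^(n-k)) n]
    have h0 : (H 0 + H (n-0) - H n) * (t-1)^0 * t^(n-0) = 0 := by
      simp [H]
    rw [h0, add_zero, Finset.mul_sum]
    exact Finset.sum_congr rfl fun k hk => by ring
  have final : ∑ k ∈ Finset.range (n+1), (t-1)^k * t^(n+1-k) / (k+1)
      - ∑ k ∈ Finset.range (n+1), (1/((k:ℝ)+1) - 1/((n:ℝ)+1)) * (t-1)^k * t^(n-k)
      = (t-1) * ∑ k ∈ Finset.range n, (t-1)^k * t^(n-k) / (k+1) + t^(n+1)/(n+1) := by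
    have e2 : ∑ k ∈ Finset.range (n+1), (t-1)^k * t^(n+1-k) / (k+1)
        - ∑ k ∈ Finset.range (n+1), (1/((k:ℝ)+1) - 1/((n:ℝ)+1)) * (t-1)^k * t^(n-k)
        = ∑ k ∈ Finset.range (n+1), ((t-1)^k * t^(n-k) * (1/((n:ℝ)+1))
            + (t-1)^(k+1) * t^(n-k) / (k+1)) := by
      rw [← Finset.sum_sub_distrib]
      refine Finset.sum_congr rfl fun k hk => ?_
      simp only [Finset.mem_range] at hk
      have h1 : n + 1 - k = (n - k) + 1 := by omega
      rw [h1, pow_succ]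
      ring
    rw [e2, Finset.sum_add_distrib]
    have e3 : ∑ k ∈ Finset.range (n+1), (t-1)^k * t^(n-k) * (1/((n:ℝ)+1))
        = (t^(n+1) - (t-1)^(n+1)) * (1/((n:ℝ)+1)) := by
      rw [← Finset.sum_mul, telescope]
    have e4 : ∑ k ∈ Finset.range (n+1), (t-1)^(k+1) * t^(n-k) / (k+1)
        = ∑ k ∈ Finset.range n, (t-1)^(k+1) * t^(n-k) / (k+1) + (t-1)^(n+1) / ((n:ℝ)+1) := by
      rw [Finset.sum_range_succ]
      simp
    have e5 : (t-1) * ∑ k ∈ Finset.range n, (t-1)^k * t^(n-k) / (k+1)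
        = ∑ k ∈ Finset.range n, (t-1)^(k+1) * t^(n-k) / (k+1) := by
      rw [Finset.mul_sum]
      exact Finset.sum_congr rfl fun k hk => by ring
    rw [e3, e4, e5]
    ring
  linear_combination (-1 : ℝ) * expand1 - hSA + final

lemma RR_eq_RS (n : ℕ) (t : ℝ) : RR n t = RS n t := by
  induction n with
  | zero => simp [RR, RS]
  | succ n ih => rw [RR_rec, RS_rec, ih]

lemma beta_nat (n : ℕ) : ∀ k : ℕ, ∫ x in (0:ℝ)..1, x^k * (1-x)^n
    = (n.factorial * k.factorial : ℝ) / (n+k+1).factorial := by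
  induction n with
  | zero =>
    intro k
    simp only [pow_zero, mul_one, integral_pow, Nat.factorial_zero]
    rw [Nat.factorial_succ]
    push_cast
    rw [one_pow, zero_pow (Nat.succ_ne_zero k)]
    have : ((k:ℝ)+1) ≠ 0 := by positivity
    have : (k.factorial : ℝ) ≠ 0 := by exact_mod_cast Nat.factorial_ne_zero k
    field_simp
    simp
  | succ n ih =>
    intro k
    have hu : ∀ x ∈ Set.uIcc (0:ℝ) 1, HasDerivAt (fun x : ℝ => (1-x)^(n+1))
        (-((n:ℝ)+1) * (1-x)^n) x := by
      intro x _
      have h1 : HasDerivAt (fun x : ℝ => 1 - x) (-1) x := by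
        simpa using (hasDerivAt_id x).const_sub 1
      have := h1.pow (n+1)
      simp only [Nat.add_sub_cancel] at this
      refine this.congr_deriv ?_
      push_cast; ring
    have hv : ∀ x ∈ Set.uIcc (0:ℝ) 1, HasDerivAt (fun x : ℝ => x^(k+1)/((k:ℝ)+1))
        (x^k) x := by
      intro x _
      have := (hasDerivAt_pow (k+1) x).div_const ((k:ℝ)+1)
      simp only [Nat.add_sub_cancel] at this
      refine this.congr_deriv ?_
      have : ((k:ℝ)+1) ≠ 0 := by positivity
      push_cast
      field_simp
    have hiu : IntervalIntegrable (fun x : ℝ => -((n:ℝ)+1) * (1-x)^n) volume 0 1 :=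
      ((by continuity : Continuous _).intervalIntegrable 0 1)
    have hiv : IntervalIntegrable (fun x : ℝ => x^k) volume 0 1 :=
      ((by continuity : Continuous _).intervalIntegrable 0 1)
    have ibp := intervalIntegral.integral_mul_deriv_eq_deriv_mul hu hv hiu hiv
    have e1 : ∫ x in (0:ℝ)..1, x^k * (1-x)^(n+1) = ∫ x in (0:ℝ)..1, (1-x)^(n+1) * x^k := by
      apply intervalIntegral.integral_congr; intro x _; ring
    rw [e1, ibp]
    have e2 : ∫ x in (0:ℝ)..1, -((n:ℝ)+1) * (1-x)^n * (x^(k+1)/((k:ℝ)+1))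
        = (-((n:ℝ)+1)/((k:ℝ)+1)) * ∫ x in (0:ℝ)..1, x^(k+1) * (1-x)^n := by
      rw [← intervalIntegral.integral_const_mul]
      apply intervalIntegral.integral_congr; intro x _; ring
    rw [e2, ih (k+1)]
    simp only [one_pow, sub_self, zero_pow (Nat.succ_ne_zero n)]
    have hk1 : ((k:ℝ)+1) ≠ 0 := by positivity
    have hnk : ((n+k+1+1).factorial : ℝ) ≠ 0 := by exact_mod_cast Nat.factorial_ne_zero _
    have hnk2 : ((n+(k+1)+1).factorial : ℝ) = ((n+k+1+1).factorial : ℝ) := by norm_num; ring_nf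
    have hfs : ((n+1).factorial : ℝ) = ((n:ℝ)+1) * n.factorial := by
      rw [Nat.factorial_succ]; push_cast; ring
    have hfk : ((k+1).factorial : ℝ) = ((k:ℝ)+1) * k.factorial := by
      rw [Nat.factorial_succ]; push_cast; ring
    have hgoal : (n+1+k+1) = (n+k+1+1) := by omega
    rw [hgoal, hnk2, hfs, hfk]
    field_simp
    ring

lemma int_pow_lin (j : ℕ) (t : ℝ) (ht : t ≠ 0) :
    ∫ x in (0:ℝ)..1, (1-t*x)^j = (1-(1-t)^(j+1))/(((j:ℝ)+1)*t) := by
  have hj : ((j:ℝ)+1) ≠ 0 := by positivity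
  have hF : ∀ x ∈ Set.uIcc (0:ℝ) 1, HasDerivAt (fun x : ℝ => -(1-t*x)^(j+1)/(((j:ℝ)+1)*t))
      ((1-t*x)^j) x := by
    intro x _
    have h1 : HasDerivAt (fun x : ℝ => 1 - t*x) (-t) x := by
      simpa using ((hasDerivAt_id x).const_mul t).const_sub 1
    have h2 := (h1.pow (j+1)).neg.div_const (((j:ℝ)+1)*t)
    simp only [Nat.add_sub_cancel] at h2
    refine h2.congr_deriv ?_
    push_cast
    field_simp
  rw [intervalIntegral.integral_eq_sub_of_hasDerivAt hF
    ((by continuity : Continuous _).intervalIntegrable 0 1)]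
  field_simp
  ring

lemma int_inv_lin (t : ℝ) (ht : t ≠ 0) (hpos : ∀ x ∈ Set.uIcc (0:ℝ) 1, 0 < 1 - t*x) :
    ∫ x in (0:ℝ)..1, 1/(1-t*x) = -Real.log (1-t)/t := by
  have hF : ∀ x ∈ Set.uIcc (0:ℝ) 1, HasDerivAt (fun x : ℝ => -Real.log (1-t*x)/t)
      (1/(1-t*x)) x := by
    intro x hx
    have h1 : HasDerivAt (fun x : ℝ => 1 - t*x) (-t) x := by
      simpa using ((hasDerivAt_id x).const_mul t).const_sub 1
    have h2 := ((Real.hasDerivAt_log (ne_of_gt (hpos x hx))).comp x h1).neg.div_const t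
    refine h2.congr_deriv ?_
    have hx0 : 1 - t*x ≠ 0 := ne_of_gt (hpos x hx)
    field_simp
  have hcont : ContinuousOn (fun x : ℝ => 1/(1-t*x)) (Set.uIcc (0:ℝ) 1) := by
    apply ContinuousOn.div continuousOn_const
    · fun_prop
    · intro x hx; exact ne_of_gt (hpos x hx)
  rw [intervalIntegral.integral_eq_sub_of_hasDerivAt hF hcont.intervalIntegrable]
  have h1 : (1:ℝ) - t*1 = 1 - t := by ring
  have h0 : (1:ℝ) - t*0 = 1 := by ring
  rw [h1, h0, Real.log_one]
  ring

lemma uIcc01 : Set.uIcc (0:ℝ) 1 = Set.Icc 0 1 := Set.uIcc_of_le zero_le_one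

lemma pos_lin (t : ℝ) (ht1 : t < 1) : ∀ x ∈ Set.uIcc (0:ℝ) 1, 0 < 1 - t*x := by
  intro x hx
  rw [uIcc01] at hx
  obtain ⟨hx0, hx1⟩ := hx
  rcases le_or_gt t 0 with h | h
  · nlinarith
  · nlinarith

lemma eval_int (n : ℕ) (hn : 0 < n) (t : ℝ) (ht1 : t < 1) (ht : t ≠ 0) :
    ∫ x in (0:ℝ)..1, t*(1-x)^n/(1-t*x)
      = RR n t / t^n - ((t-1)/t)^n * Real.log (1-t) := by
  have hpos := pos_lin t ht1
  have htn : (t:ℝ)^(n-1) ≠ 0 := pow_ne_zero _ ht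
  have htn' : (t:ℝ)^n ≠ 0 := pow_ne_zero _ ht
  have hty : t^(n-1) * t = t^n := by
    rw [← pow_succ]; congr 1; omega
  have hrw : ∀ x ∈ Set.uIcc (0:ℝ) 1, t*(1-x)^n/(1-t*x)
      = (∑ j ∈ Finset.range n, ((n.choose (j+1):ℝ)*(t-1)^(n-(j+1))/t^(n-1)) * (1-t*x)^j)
        + ((t-1)^n/t^(n-1)) * (1/(1-t*x)) := by
    intro x hx
    have hy : 1 - t*x ≠ 0 := ne_of_gt (hpos x hx)
    set S : ℝ := ∑ j ∈ Finset.range n, (1-t*x)^j * (t-1)^(n-(j+1)) * (n.choose (j+1):ℝ) with hS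
    have hbin : t^n*(1-x)^n = (1-t*x) * S + (t-1)^n := by
      have h := add_pow (1-t*x) (t-1) n
      have h2 : t^n*(1-x)^n = ((1-t*x)+(t-1))^n := by
        rw [← mul_pow]; ring_nf
      rw [h2, h]
      rw [Finset.sum_range_succ'
        (fun m => (1-t*x)^m * (t-1)^(n-m) * (n.choose m : ℝ)) n]
      simp only [Nat.choose_zero_right, Nat.cast_one, mul_one, Nat.sub_zero, pow_zero, one_mul]
      rw [hS, Finset.mul_sum]
      congr 1
      refine Finset.sum_congr rfl fun j hj => ?_
      ring
    have hsum : ∑ j ∈ Finset.range n, ((n.choose (j+1):ℝ)*(t-1)^(n-(j+1))/t^(n-1)) * (1-t*x)^j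
        = S / t^(n-1) := by
      rw [hS, Finset.sum_div]
      refine Finset.sum_congr rfl fun j hj => ?_
      ring
    rw [hsum]
    calc t*(1-x)^n/(1-t*x) = ((1-t*x)*S + (t-1)^n)/(t^(n-1)*(1-t*x)) := by
          rw [← hbin, div_eq_div_iff hy (mul_ne_zero htn hy)]
          linear_combination ((1-x)^n*(1-t*x)) * hty
      _ = S/t^(n-1) + (t-1)^n/t^(n-1) * (1/(1-t*x)) := by
          field_simp
  rw [intervalIntegral.integral_congr hrw]
  have hcont2 : ContinuousOn (fun x : ℝ => ((t-1)^n/t^(n-1)) * (1/(1-t*x))) (Set.uIcc (0:ℝ) 1) := by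
    apply ContinuousOn.mul continuousOn_const
    apply ContinuousOn.div continuousOn_const
    · fun_prop
    · intro x hx; exact ne_of_gt (hpos x hx)
  have hInt1 : IntervalIntegrable
      (fun x : ℝ => ∑ j ∈ Finset.range n, ((n.choose (j+1):ℝ)*(t-1)^(n-(j+1))/t^(n-1)) * (1-t*x)^j)
      volume 0 1 := ((by fun_prop : Continuous _).intervalIntegrable 0 1)
  rw [intervalIntegral.integral_add hInt1 hcont2.intervalIntegrable]
  rw [intervalIntegral.integral_finset_sum
    (fun j _ => ((by fun_prop : Continuous _).intervalIntegrable 0 1))]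
  have e1 : ∀ j ∈ Finset.range n,
      ∫ x in (0:ℝ)..1, ((n.choose (j+1):ℝ)*(t-1)^(n-(j+1))/t^(n-1)) * (1-t*x)^j
      = (n.choose (j+1):ℝ) * (t-1)^(n-(j+1)) * (1-(1-t)^(j+1)) / (j+1) / t^n := by
    intro j hj
    rw [intervalIntegral.integral_const_mul, int_pow_lin j t ht]
    have hj1 : ((j:ℝ)+1) ≠ 0 := by positivity
    have e : (n.choose (j+1):ℝ)*(t-1)^(n-(j+1))/t^(n-1) * ((1-(1-t)^(j+1))/(((j:ℝ)+1)*t))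
        = (n.choose (j+1):ℝ)*(t-1)^(n-(j+1))*(1-(1-t)^(j+1))/(((j:ℝ)+1)*(t^(n-1)*t)) := by
      rw [div_mul_div_comm]
      congr 1
      ring
    rw [e, hty]
    field_simp
  rw [Finset.sum_congr rfl e1]
  rw [intervalIntegral.integral_const_mul, int_inv_lin t ht hpos]
  rw [RR, Finset.sum_div]
  congr 1
  rw [div_pow]
  have e : (t-1)^n/t^(n-1) * (-Real.log (1-t)/t) = -((t-1)^n * Real.log (1-t))/(t^(n-1)*t) := by
    rw [div_mul_div_comm]
    congr 1
    · ring
  rw [e, hty]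
  ring

lemma ioo_int (f : ℝ → ℝ) : ∫ x in Set.Ioo (0:ℝ) 1, f x = ∫ x in (0:ℝ)..1, f x := by
  rw [intervalIntegral.integral_of_le zero_le_one, MeasureTheory.integral_Ioc_eq_integral_Ioo]

lemma fact_cast (n k : ℕ) :
    (((k:ℝ)+1) * (Nat.choose (n+(k+1)) (k+1) : ℝ)) * ((n.factorial : ℝ) * (k.factorial : ℝ))
      = ((n+k+1).factorial : ℝ) := by
  have h := Nat.choose_mul_factorial_mul_factorial (show k+1 ≤ n+k+1 by omega)
  have h2 : n+k+1-(k+1) = n := by omega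
  rw [h2] at h
  have h3 : (k+1) * Nat.choose (n+(k+1)) (k+1) * (n.factorial * k.factorial)
      = (n+k+1).factorial := by
    have h4 : n+(k+1) = n+k+1 := by omega
    rw [h4, ← h, Nat.factorial_succ]
    ring
  exact_mod_cast congrArg (Nat.cast (R := ℝ)) h3

lemma fact_bound (n k : ℕ) (hn : 0 < n) :
    (n.factorial : ℝ) * k.factorial / (n+k+1).factorial ≤ 1/(((k:ℝ)+1)*((k:ℝ)+2)) := by
  have hnat : (k+1)*(k+2) * (n.factorial * k.factorial) ≤ (n+k+1).factorial := by
    have h := Nat.choose_mul_factorial_mul_factorial (show k+1 ≤ n+k+1 by omega)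
    have h2 : n+k+1-(k+1) = n := by omega
    rw [h2] at h
    have hc : k+2 ≤ Nat.choose (n+k+1) (k+1) := by
      calc k+2 = Nat.choose (k+2) (k+1) := by rw [Nat.choose_succ_self_right]
        _ ≤ Nat.choose (n+k+1) (k+1) := Nat.choose_le_choose _ (by omega)
    calc (k+1)*(k+2) * (n.factorial * k.factorial)
        = (k+2) * ((k+1) * k.factorial * n.factorial) := by ring
      _ = (k+2) * ((k+1).factorial * n.factorial) := by rw [Nat.factorial_succ]
      _ ≤ Nat.choose (n+k+1) (k+1) * ((k+1).factorial * n.factorial) := by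
          exact Nat.mul_le_mul_right _ hc
      _ = (n+k+1).factorial := by rw [← h]; ring
  rw [div_le_div_iff₀ (by positivity) (by positivity)]
  calc (n.factorial : ℝ) * k.factorial * (((k:ℝ)+1)*((k:ℝ)+2))
      = (((k:ℝ)+1)*((k:ℝ)+2)) * ((n.factorial:ℝ) * k.factorial) := by ring
    _ ≤ ((n+k+1).factorial : ℝ) := by exact_mod_cast hnat
    _ = 1 * ((n+k+1).factorial : ℝ) := by ring

lemma tsum_int (n : ℕ) (hn : 0 < n) (t : ℝ) (ht0 : -1 ≤ t) (ht1 : t < 1) :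
    ∑' k : ℕ, t ^ (k + 1) / (((k : ℝ) + 1) * (Nat.choose (n + (k + 1)) (k + 1) : ℝ))
      = ∫ x in (0:ℝ)..1, t*(1-x)^n/(1-t*x) := by
  have htabs : |t| ≤ 1 := abs_le.mpr ⟨ht0, le_of_lt ht1⟩
  set F : ℕ → ℝ → ℝ := fun k x => t^(k+1) * (x^k * (1-x)^n) with hF
  have hFint : ∀ k : ℕ, Integrable (F k) (volume.restrict (Set.Ioo (0:ℝ) 1)) := by
    intro k
    have hc : Continuous (F k) := by fun_prop
    exact (hc.integrableOn_Icc).mono_set Set.Ioo_subset_Icc_self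
  have hIoo : ∀ k : ℕ, ∫ x in Set.Ioo (0:ℝ) 1, F k x
      = t^(k+1) * ((n.factorial : ℝ) * k.factorial / (n+k+1).factorial) := by
    intro k
    rw [ioo_int, hF]
    rw [intervalIntegral.integral_const_mul, beta_nat n k]
  have hterm : ∀ k : ℕ, t ^ (k + 1) / (((k : ℝ) + 1) * (Nat.choose (n + (k + 1)) (k + 1) : ℝ))
      = ∫ x in Set.Ioo (0:ℝ) 1, F k x := by
    intro k
    rw [hIoo k]
    have hne : (((k:ℝ)+1) * (Nat.choose (n+(k+1)) (k+1) : ℝ)) ≠ 0 := by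
      have : 0 < Nat.choose (n+(k+1)) (k+1) := Nat.choose_pos (by omega)
      have : (0:ℝ) < Nat.choose (n+(k+1)) (k+1) := by exact_mod_cast this
      positivity
    have hfne : ((n+k+1).factorial : ℝ) ≠ 0 := by
      exact_mod_cast Nat.factorial_ne_zero _
    have h1 : ((n.factorial:ℝ) * k.factorial / ((n+k+1).factorial:ℝ))
        * (((k:ℝ)+1) * (Nat.choose (n+(k+1)) (k+1):ℝ)) = 1 := by
      rw [div_mul_eq_mul_div, div_eq_one_iff_eq hfne]
      linear_combination fact_cast n k
    rw [div_eq_iff hne, mul_assoc, h1, mul_one]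
  have hnorm : ∀ k : ℕ, ∫ x in Set.Ioo (0:ℝ) 1, ‖F k x‖
      = |t|^(k+1) * ((n.factorial : ℝ) * k.factorial / (n+k+1).factorial) := by
    intro k
    have : ∀ x ∈ Set.Ioo (0:ℝ) 1, ‖F k x‖ = |t|^(k+1) * (x^k * (1-x)^n) := by
      intro x hx
      obtain ⟨hx0, hx1⟩ := hx
      rw [hF]
      simp only [Real.norm_eq_abs, abs_mul, abs_pow]
      rw [abs_of_pos hx0, abs_of_pos (by linarith : (0:ℝ) < 1 - x)]
    rw [MeasureTheory.setIntegral_congr_fun measurableSet_Ioo this]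
    rw [ioo_int, intervalIntegral.integral_const_mul, beta_nat n k]
  have hsum : Summable fun k : ℕ => ∫ x in Set.Ioo (0:ℝ) 1, ‖F k x‖ := by
    have hb : Summable fun k : ℕ => 1/(((k:ℝ)+1)*((k:ℝ)+2)) := by
      have h2 : Summable fun k : ℕ => 1/((k:ℝ)+1)^2 := by
        have := (Real.summable_one_div_nat_pow (p := 2)).mpr (by norm_num)
        have h3 := (summable_nat_add_iff 1).mpr this
        refine h3.congr fun k => ?_
        push_cast
        norm_num
      refine Summable.of_nonneg_of_le (fun k => by positivity) (fun k => ?_) h2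
      rw [div_le_div_iff₀ (by positivity) (by positivity)]
      nlinarith [sq_nonneg ((k:ℝ)+1)]
    refine Summable.of_nonneg_of_le (fun k => ?_) (fun k => ?_) hb
    · rw [hnorm k]
      have h1 : (0:ℝ) ≤ |t|^(k+1) := by positivity
      have h2 : (0:ℝ) ≤ (n.factorial : ℝ) * k.factorial / (n+k+1).factorial := by positivity
      exact mul_nonneg h1 h2
    · rw [hnorm k]
      calc |t|^(k+1) * ((n.factorial : ℝ) * k.factorial / (n+k+1).factorial)
          ≤ 1 * (1/(((k:ℝ)+1)*((k:ℝ)+2))) := by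
            apply mul_le_mul (pow_le_one₀ (abs_nonneg t) htabs) (fact_bound n k hn)
              (by positivity) zero_le_one
        _ = 1/(((k:ℝ)+1)*((k:ℝ)+2)) := by ring
  have hswap := MeasureTheory.integral_tsum_of_summable_integral_norm hFint hsum
  have hptw : ∀ x ∈ Set.Ioo (0:ℝ) 1, (∑' k : ℕ, F k x) = t*(1-x)^n/(1-t*x) := by
    intro x hx
    obtain ⟨hx0, hx1⟩ := hx
    have habs : |t*x| < 1 := by
      rw [abs_mul]
      have h1 : |t| * |x| ≤ 1 * |x| := mul_le_mul_of_nonneg_right htabs (abs_nonneg x)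
      have h2 : |x| < 1 := by rw [abs_of_pos hx0]; exact hx1
      nlinarith
    have e1 : ∀ k : ℕ, F k x = (t*(1-x)^n) * (t*x)^k := by
      intro k
      rw [hF, mul_pow]
      ring
    rw [tsum_congr e1, tsum_mul_left, tsum_geometric_of_abs_lt_one habs]
    ring
  calc ∑' k : ℕ, t ^ (k + 1) / (((k : ℝ) + 1) * (Nat.choose (n + (k + 1)) (k + 1) : ℝ))
      = ∑' k : ℕ, ∫ x in Set.Ioo (0:ℝ) 1, F k x := tsum_congr hterm
    _ = ∫ x in Set.Ioo (0:ℝ) 1, ∑' k : ℕ, F k x := hswap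
    _ = ∫ x in Set.Ioo (0:ℝ) 1, t*(1-x)^n/(1-t*x) :=
        MeasureTheory.setIntegral_congr_fun measurableSet_Ioo hptw
    _ = ∫ x in (0:ℝ)..1, t*(1-x)^n/(1-t*x) := ioo_int _

lemma icc_range (n : ℕ) (f : ℕ → ℝ) :
    ∑ k ∈ Finset.Icc 1 n, f k = ∑ k ∈ Finset.range n, f (k+1) := by
  rw [← Finset.Ico_add_one_right_eq_Icc, Finset.sum_Ico_eq_sum_range]
  have h : n + 1 - 1 = n := by omega
  rw [h]
  exact Finset.sum_congr rfl fun i _ => by rw [Nat.add_comm]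

lemma RS_div (n : ℕ) (t : ℝ) (ht : t ≠ 0) (ht1 : t < 1) :
    RS n t / t^n
      = 1 / (1 - t) * (∑ k ∈ Finset.Icc 1 n, (H k + H (n - k) - H n) * ((t - 1) / t) ^ k) +
        ∑ k ∈ Finset.Icc 1 n, 1 / (k : ℝ) * ((t - 1) / t) ^ (k - 1) := by
  have h1t : (1:ℝ) - t ≠ 0 := by intro h; linarith [h]
  rw [icc_range n (fun k => (H k + H (n - k) - H n) * ((t - 1) / t) ^ k),
    icc_range n (fun k => 1 / (k : ℝ) * ((t - 1) / t) ^ (k - 1))]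
  rw [RS, add_div, neg_div, Finset.sum_div, Finset.sum_div, Finset.mul_sum, ← Finset.sum_neg_distrib]
  congr 1
  · refine Finset.sum_congr rfl fun k hk => ?_
    simp only [Finset.mem_range] at hk
    have hsplit : (t:ℝ)^n = t^(n-(k+1)) * t^(k+1) := by rw [← pow_add]; congr 1; omega
    rw [div_pow, hsplit]
    have htk : (t:ℝ)^(k+1) ≠ 0 := pow_ne_zero _ ht
    have htk2 : (t:ℝ)^(n-(k+1)) ≠ 0 := pow_ne_zero _ ht
    field_simp
    ring
  · refine Finset.sum_congr rfl fun k hk => ?_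
    simp only [Finset.mem_range] at hk
    have hsplit : (t:ℝ)^n = t^(n-k) * t^k := by rw [← pow_add]; congr 1; omega
    rw [div_pow, hsplit]
    have htk : (t:ℝ)^k ≠ 0 := pow_ne_zero _ ht
    have htk2 : (t:ℝ)^(n-k) ≠ 0 := pow_ne_zero _ ht
    have hk1 : ((k:ℝ)+1) ≠ 0 := by positivity
    have hred : (k+1) - 1 = k := by omega
    rw [hred]
    push_cast
    field_simp

/-- For `n` a positive integer and real `t` with `-1 ≤ t < 1`, `t ≠ 0`,
`∑_{k=1}^∞ t^k/(k C(n+k,k)) = (1/(1-t)) ∑_{k=1}^n (H_k+H_{n-k}-H_n)((t-1)/t)^k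
  + ∑_{k=1}^n (1/k)((t-1)/t)^{k-1} - ((t-1)/t)^n log(1-t)`. -/
theorem binom_series_lin (n : ℕ) (hn : 0 < n) (t : ℝ) (ht0 : -1 ≤ t) (ht1 : t < 1)
    (ht : t ≠ 0) :
    ∑' k : ℕ, t ^ (k + 1) / (((k : ℝ) + 1) * (Nat.choose (n + (k + 1)) (k + 1) : ℝ)) =
      1 / (1 - t) * (∑ k ∈ Finset.Icc 1 n, (H k + H (n - k) - H n) * ((t - 1) / t) ^ k) +
        (∑ k ∈ Finset.Icc 1 n, 1 / (k : ℝ) * ((t - 1) / t) ^ (k - 1)) -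
        ((t - 1) / t) ^ n * Real.log (1 - t) := by
  rw [tsum_int n hn t ht0 ht1, eval_int n hn t ht1 ht, RR_eq_RS, RS_div n t ht ht1]
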